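/- Let G be a finite connected graph with m edges, each parametrized on [0,1], and a distinguished vertex v_n. Let V₀ be the space of functions f = (f₁,…,f_m) with each f_j ∈ H¹(0,1), which are continuous at each vertex (endpoint values of f_j coincide whenever edges meet at a common vertex) and vanish at v_n. Then there is a Poincaré-type inequality: Σ_{j=1}^m ∫₀¹ |f_j(x)| dx ≤ m · Σ_{j=1}^m ∫₀¹ |f_j'(x)| dx for all f ∈ V₀. -/

import Mathlib

open MeasureTheory

/-- Poincaré-type inequality on a finite connected network with a Dirichlet vertex `vn`:
for `f ∈ V₀` (edgewise `H¹` functions, given via their absolutely continuous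
representatives, continuous at the vertices and vanishing at `vn`),
`∑_j ∫₀¹ |f_j| ≤ m · ∑_j ∫₀¹ |f_j'|`. -/
theorem stmt_4 (n m : ℕ) (tail head : Fin m → Fin n) (vn : Fin n)
    (hconn : ∀ v : Fin n, Relation.ReflTransGen
      (fun a b => ∃ j, (tail j = a ∧ head j = b) ∨ (tail j = b ∧ head j = a)) vn v)
    (f f' : Fin m → ℝ → ℂ) (d : Fin n → ℂ)
    (hint : ∀ j, IntervalIntegrable (f' j) volume 0 1)
    (hftc : ∀ j, ∀ x ∈ Set.Icc (0:ℝ) 1, f j x = f j 0 + ∫ s in (0:ℝ)..x, f' j s)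
    (h0 : ∀ j, f j 0 = d (tail j)) (h1 : ∀ j, f j 1 = d (head j))
    (hD : d vn = 0) :
    ∑ j, ∫ x in (0:ℝ)..1, ‖f j x‖ ≤ m * ∑ j, ∫ x in (0:ℝ)..1, ‖f' j x‖ := by
  classical
  set A : Fin m → ℝ := fun k => ∫ x in (0:ℝ)..1, ‖f' k x‖ with hA_def
  have hA0 : ∀ k, 0 ≤ A k := fun k =>
    intervalIntegral.integral_nonneg (by norm_num) (fun x _ => norm_nonneg _)
  set S : ℝ := ∑ k, A k with hS_def
  -- each edge difference is bounded by A j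
  have hedge : ∀ j, ‖d (head j) - d (tail j)‖ ≤ A j := by
    intro j
    have h := hftc j 1 (by norm_num)
    rw [h1 j, h0 j] at h
    have : d (head j) - d (tail j) = ∫ s in (0:ℝ)..1, f' j s := by
      rw [h]; ring
    rw [this]
    calc ‖∫ s in (0:ℝ)..1, f' j s‖ ≤ ∫ s in (0:ℝ)..1, ‖f' j s‖ :=
          intervalIntegral.norm_integral_le_integral_norm (by norm_num)
      _ = A j := rfl
  -- the graph
  let G : SimpleGraph (Fin n) :=
    { Adj := fun a b => a ≠ b ∧ ∃ j, (tail j = a ∧ head j = b) ∨ (tail j = b ∧ head j = a)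
      symm := by
        constructor
        rintro a b ⟨hne, j, h⟩
        exact ⟨hne.symm, j, h.symm⟩
      loopless := ⟨fun a h => h.1 rfl⟩ }
  -- bound along a path
  have walkBound : ∀ (v w : Fin n) (p : G.Walk v w), p.IsPath →
      ∃ E : Finset (Fin m), (∀ k ∈ E, s(tail k, head k) ∈ p.edges) ∧
        ‖d w - d v‖ ≤ ∑ k ∈ E, A k := by
    intro v w p
    induction p with
    | nil =>
      intro _
      exact ⟨∅, by simp, by simp⟩
    | @cons a b c hadj p ih =>
      intro hp
      rw [SimpleGraph.Walk.cons_isPath_iff] at hp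
      obtain ⟨E, hEmem, hEle⟩ := ih hp.1
      obtain ⟨hne, j, hj⟩ := hadj
      have hjE : j ∉ E := by
        intro hjmem
        have := hEmem j hjmem
        have ha : a ∈ p.support := by
          rcases hj with ⟨ht, hh⟩ | ⟨ht, hh⟩
          · rw [ht] at this
            exact SimpleGraph.Walk.fst_mem_support_of_mem_edges p this
          · rw [ht, hh] at this
            exact SimpleGraph.Walk.snd_mem_support_of_mem_edges p this
        exact hp.2 ha
      refine ⟨insert j E, ?_, ?_⟩
      · intro k hk
        rcases Finset.mem_insert.mp hk with rfl | hk
        · rcases hj with ⟨ht, hh⟩ | ⟨ht, hh⟩ <;>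
            simp [SimpleGraph.Walk.edges_cons, ht, hh, Sym2.eq_swap]
        · exact List.mem_cons_of_mem _ (hEmem k hk)
      · rw [Finset.sum_insert hjE]
        have hab : ‖d b - d a‖ ≤ A j := by
          rcases hj with ⟨ht, hh⟩ | ⟨ht, hh⟩
          · rw [← ht, ← hh]; exact hedge j
          · rw [← ht, ← hh, ← norm_neg]
            simpa using hedge j
        calc ‖d c - d a‖ ≤ ‖d c - d b‖ + ‖d b - d a‖ := by
              simpa using norm_sub_le_norm_sub_add_norm_sub (d c) (d b) (d a)
          _ ≤ ∑ k ∈ E, A k + A j := add_le_add hEle hab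
          _ = A j + ∑ k ∈ E, A k := by ring
  -- reachability
  have hreach : ∀ v, G.Reachable vn v := by
    intro v
    induction hconn v with
    | refl => exact SimpleGraph.Reachable.refl _
    | tail _ hstep ih =>
      rename_i b c _
      obtain ⟨j, hj⟩ := hstep
      by_cases hbc : b = c
      · rwa [hbc] at ih
      · exact ih.trans (SimpleGraph.Adj.reachable ⟨hbc, j, hj⟩)
  -- for each edge j, one of its endpoints is reachable avoiding j
  have key : ∀ j : Fin m, ∃ E : Finset (Fin m), j ∉ E ∧
      (‖d (tail j)‖ ≤ ∑ k ∈ E, A k ∨ ‖d (head j)‖ ≤ ∑ k ∈ E, A k) := by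
    intro j
    obtain ⟨w⟩ := hreach (tail j)
    set p : G.Walk vn (tail j) := (w.toPath : G.Walk vn (tail j)) with hp_def
    have hp : p.IsPath := w.toPath.2
    by_cases hmem : s(tail j, head j) ∈ p.edges
    · -- takeUntil head j
      have hhd : head j ∈ p.support :=
        SimpleGraph.Walk.snd_mem_support_of_mem_edges p hmem
      set q := p.takeUntil (head j) hhd with hq_def
      have hq : q.IsPath := hp.takeUntil hhd
      obtain ⟨E, hEmem, hEle⟩ := walkBound _ _ q hq
      have hTH : tail j ≠ head j := (p.adj_of_mem_edges hmem).ne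
      have hnotin : s(tail j, head j) ∉ q.edges := by
        intro habs
        have hTq : tail j ∈ q.support :=
          SimpleGraph.Walk.fst_mem_support_of_mem_edges q habs
        -- p = q.append (p.dropUntil _ _); tail j is in the tail of dropUntil's support
        have hspec := p.take_spec hhd
        have hnodup : p.support.Nodup := hp.support_nodup
        rw [← hspec, SimpleGraph.Walk.support_append] at hnodup
        have hdisj := (List.nodup_append.mp hnodup).2.2
        have hTr : tail j ∈ (p.dropUntil (head j) hhd).support.tail := by
          have : tail j ∈ (p.dropUntil (head j) hhd).support :=
            SimpleGraph.Walk.end_mem_support _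
          rcases (SimpleGraph.Walk.mem_support_iff _).mp this with h | h
          · exact absurd h hTH
          · exact h
        exact hdisj _ hTq _ hTr rfl
      refine ⟨E, ?_, Or.inr ?_⟩
      · intro hjE
        exact hnotin (hEmem j hjE)
      · have : ‖d (head j) - d vn‖ ≤ ∑ k ∈ E, A k := hEle
        rwa [hD, sub_zero] at this
    · obtain ⟨E, hEmem, hEle⟩ := walkBound _ _ p hp
      refine ⟨E, ?_, Or.inl ?_⟩
      · intro hjE
        exact hmem (hEmem j hjE)
      · have : ‖d (tail j) - d vn‖ ≤ ∑ k ∈ E, A k := hEle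
        rwa [hD, sub_zero] at this
  -- per-edge analytic bound
  have hperedge : ∀ j, (∫ x in (0:ℝ)..1, ‖f j x‖) ≤ S := by
    intro j
    obtain ⟨E, hjE, hcase⟩ := key j
    have hEsub : E ⊆ Finset.univ.erase j := fun k hk =>
      Finset.mem_erase.mpr ⟨fun h => hjE (h ▸ hk), Finset.mem_univ k⟩
    have hEle : ∑ k ∈ E, A k ≤ ∑ k ∈ Finset.univ.erase j, A k :=
      Finset.sum_le_sum_of_subset_of_nonneg hEsub (fun k _ _ => hA0 k)
    have hES : ∑ k ∈ E, A k + A j ≤ S := by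
      calc ∑ k ∈ E, A k + A j ≤ ∑ k ∈ Finset.univ.erase j, A k + A j :=
            add_le_add_left hEle _
        _ = S := by
            rw [hS_def, Finset.sum_erase_add _ _ (Finset.mem_univ j)]
    -- pointwise bound on (0,1]
    have hpt : ∀ x ∈ Set.uIoc (0:ℝ) 1, ‖(‖f j x‖)‖ ≤ ∑ k ∈ E, A k + A j := by
      intro x hx
      rw [Set.uIoc_of_le (by norm_num : (0:ℝ) ≤ 1)] at hx
      have hxIcc : x ∈ Set.Icc (0:ℝ) 1 := ⟨le_of_lt hx.1, hx.2⟩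
      rw [Real.norm_eq_abs, abs_of_nonneg (norm_nonneg _)]
      have hi1 : IntervalIntegrable (f' j) volume 0 x :=
        (hint j).mono_set (by
          rw [Set.uIcc_of_le hxIcc.1, Set.uIcc_of_le (by norm_num : (0:ℝ) ≤ 1)]
          exact Set.Icc_subset_Icc le_rfl hxIcc.2)
      have hi2 : IntervalIntegrable (f' j) volume x 1 :=
        (hint j).mono_set (by
          rw [Set.uIcc_of_le hxIcc.2, Set.uIcc_of_le (by norm_num : (0:ℝ) ≤ 1)]
          exact Set.Icc_subset_Icc hxIcc.1 le_rfl)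
      have hmono1 : (∫ s in (0:ℝ)..x, ‖f' j s‖) ≤ A j := by
        apply intervalIntegral.integral_mono_interval le_rfl hxIcc.1 hxIcc.2
        · exact Filter.Eventually.of_forall (fun s => norm_nonneg _)
        · exact (hint j).norm
      have hmono2 : (∫ s in x..1, ‖f' j s‖) ≤ A j := by
        apply intervalIntegral.integral_mono_interval hxIcc.1 hxIcc.2 le_rfl
        · exact Filter.Eventually.of_forall (fun s => norm_nonneg _)
        · exact (hint j).norm
      rcases hcase with hc | hc
      · -- bound via tail endpoint
        have := hftc j x hxIcc
        calc ‖f j x‖ = ‖f j 0 + ∫ s in (0:ℝ)..x, f' j s‖ := by rw [← this]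
          _ ≤ ‖f j 0‖ + ‖∫ s in (0:ℝ)..x, f' j s‖ := norm_add_le _ _
          _ ≤ ‖d (tail j)‖ + ∫ s in (0:ℝ)..x, ‖f' j s‖ := by
              rw [h0 j]
              exact add_le_add_right
                (intervalIntegral.norm_integral_le_integral_norm hxIcc.1) _
          _ ≤ ∑ k ∈ E, A k + A j := add_le_add hc hmono1
      · -- bound via head endpoint
        have hx1 := hftc j x hxIcc
        have h11 := hftc j 1 (by norm_num)
        have hsplit : (∫ s in (0:ℝ)..x, f' j s) + ∫ s in x..1, f' j s
            = ∫ s in (0:ℝ)..1, f' j s :=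
          intervalIntegral.integral_add_adjacent_intervals hi1 hi2
        have hfx : f j x = f j 1 - ∫ s in x..1, f' j s := by
          rw [hx1, h11, ← hsplit]; ring
        calc ‖f j x‖ = ‖f j 1 - ∫ s in x..1, f' j s‖ := by rw [hfx]
          _ ≤ ‖f j 1‖ + ‖∫ s in x..1, f' j s‖ := norm_sub_le _ _
          _ ≤ ‖d (head j)‖ + ∫ s in x..1, ‖f' j s‖ := by
              rw [h1 j]
              exact add_le_add_right
                (intervalIntegral.norm_integral_le_integral_norm hxIcc.2) _
          _ ≤ ∑ k ∈ E, A k + A j := add_le_add hc hmono2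
    have := intervalIntegral.norm_integral_le_of_norm_le_const hpt
    rw [Real.norm_eq_abs] at this
    calc (∫ x in (0:ℝ)..1, ‖f j x‖) ≤ |∫ x in (0:ℝ)..1, ‖f j x‖| := le_abs_self _
      _ ≤ (∑ k ∈ E, A k + A j) * |1 - 0| := this
      _ = ∑ k ∈ E, A k + A j := by norm_num
      _ ≤ S := hES
  calc ∑ j, ∫ x in (0:ℝ)..1, ‖f j x‖ ≤ ∑ _j : Fin m, S :=
        Finset.sum_le_sum (fun j _ => hperedge j)
    _ = m * S := by simp [Finset.sum_const, mul_comm]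
    _ = m * ∑ j, ∫ x in (0:ℝ)..1, ‖f' j x‖ := rfl
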